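/- Let σ be a 3-form on ℝⁿ and let J be an orthogonal skew-symmetric endomorphism of ℝⁿ with J² = −id, such that σ_X(JX) = 0 and σ_X² = −‖X‖² id + X⊗X + (JX)⊗(JX) for all X ∈ ℝⁿ. Let ω_J be the 2-form on ℝⁿ defined by ω_J(X,Y) = ⟨JX, Y⟩. Then the 3-form τ := e_{n+1} ∧ ω_J + σ on ℝ^{n+1} = ℝⁿ ⊕ ℝe_{n+1} is a vector cross product on ℝ^{n+1}. -/

import Mathlib

open scoped RealInnerProductSpace

noncomputable section

/-- Euclidean space `ℝⁿ`. -/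
abbrev Euc (n : ℕ) : Type := EuclideanSpace ℝ (Fin n)

/-- The skew-symmetric endomorphism `τ_X` of `ℝⁿ` associated to a 3-form `τ` and a vector `X`,
characterized by `⟪τ_X Y, Z⟫ = τ (X, Y, Z)`. -/
noncomputable def contr3 {n : ℕ} (τ : AlternatingMap ℝ (Euc n) ℝ (Fin 3)) (X : Euc n) :
    Euc n →ₗ[ℝ] Euc n where
  toFun Y := ∑ i : Fin n,
    ((τ.curryLeft X).curryLeft Y ![EuclideanSpace.single i 1]) • EuclideanSpace.single i (1 : ℝ)
  map_add' Y₁ Y₂ := by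
    simp [map_add, add_smul, Finset.sum_add_distrib]
  map_smul' c Y := by
    simp [map_smul, smul_smul, Finset.smul_sum]

/-- `τ` is a vector cross product: `‖τ_X Y‖² = ‖X‖²‖Y‖² − ⟪X,Y⟫²`. -/
def IsVCP {n : ℕ} (τ : AlternatingMap ℝ (Euc n) ℝ (Fin 3)) : Prop :=
  ∀ X Y : Euc n, ‖contr3 τ X Y‖ ^ 2 = ‖X‖ ^ 2 * ‖Y‖ ^ 2 - ⟪X, Y⟫ ^ 2

/-- `σ` is a generalized vector cross product: there is a nonzero skew-symmetric endomorphism `A`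
such that for every unit vector `X`, `σ_X` is orthogonally conjugate to `A`. -/
def IsGVCP {n : ℕ} (σ : AlternatingMap ℝ (Euc n) ℝ (Fin 3)) : Prop :=
  ∃ A : Euc n →ₗ[ℝ] Euc n, A ≠ 0 ∧ (∀ X Y : Euc n, ⟪A X, Y⟫ = -⟪X, A Y⟫) ∧
    ∀ X : Euc n, ‖X‖ = 1 → ∃ u : Euc n ≃ₗᵢ[ℝ] Euc n,
      ∀ Y : Euc n, contr3 σ X Y = u (A (u.symm Y))

/-- The endomorphism `U ⊗ V : X ↦ ⟪X, V⟫ U`. -/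
noncomputable def tens {n : ℕ} (U V : Euc n) : Euc n →ₗ[ℝ] Euc n where
  toFun X := ⟪X, V⟫ • U
  map_add' X₁ X₂ := by rw [inner_add_left, add_smul]
  map_smul' c X := by simp only [RingHom.id_apply]; rw [real_inner_smul_left, mul_smul]

/-- The `i`-th coordinate, as a linear functional on `ℝⁿ`. -/
noncomputable def coordL {n : ℕ} (i : Fin n) : Euc n →ₗ[ℝ] ℝ where
  toFun x := x i
  map_add' _ _ := rfl
  map_smul' _ _ := rfl

/-- The elementary 3-form `eᵢ ∧ eⱼ ∧ e_k` on `ℝⁿ`. -/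
noncomputable def elem3 {n : ℕ} (i j k : Fin n) : AlternatingMap ℝ (Euc n) ℝ (Fin 3) :=
  (Matrix.detRowAlternating : AlternatingMap ℝ (Fin 3 → ℝ) ℝ (Fin 3)).compLinearMap
    (LinearMap.pi (fun s : Fin 3 => coordL (![i, j, k] s)))

/-- The action of an orthogonal transformation `α` on 3-forms:
`(α · τ)(X,Y,Z) = τ(α⁻¹X, α⁻¹Y, α⁻¹Z)`. -/
noncomputable def oAct {n : ℕ} (α : Euc n ≃ₗᵢ[ℝ] Euc n)
    (τ : AlternatingMap ℝ (Euc n) ℝ (Fin 3)) : AlternatingMap ℝ (Euc n) ℝ (Fin 3) :=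
  τ.compLinearMap α.symm.toLinearEquiv.toLinearMap

/-- The volume form `e₁ ∧ e₂ ∧ e₃` (in any `ℝⁿ` with `n ≥ 3`). -/
noncomputable def vol3Gen {n : ℕ} (h : 3 ≤ n) : AlternatingMap ℝ (Euc n) ℝ (Fin 3) :=
  elem3 ⟨0, by omega⟩ ⟨1, by omega⟩ ⟨2, by omega⟩

/-- The fundamental `G₂` 3-form
`τ₀ = e₁∧e₂∧e₇ + e₃∧e₄∧e₇ + e₅∧e₆∧e₇ + e₁∧e₃∧e₅ − e₁∧e₄∧e₆ − e₂∧e₃∧e₆ − e₂∧e₄∧e₅`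
(with 1-indexed basis vectors, stated in any `ℝⁿ` with `n ≥ 7`). -/
noncomputable def tau0Gen {n : ℕ} (h : 7 ≤ n) : AlternatingMap ℝ (Euc n) ℝ (Fin 3) :=
  elem3 ⟨0, by omega⟩ ⟨1, by omega⟩ ⟨6, by omega⟩
  + elem3 ⟨2, by omega⟩ ⟨3, by omega⟩ ⟨6, by omega⟩
  + elem3 ⟨4, by omega⟩ ⟨5, by omega⟩ ⟨6, by omega⟩
  + elem3 ⟨0, by omega⟩ ⟨2, by omega⟩ ⟨4, by omega⟩
  - elem3 ⟨0, by omega⟩ ⟨3, by omega⟩ ⟨5, by omega⟩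
  - elem3 ⟨1, by omega⟩ ⟨2, by omega⟩ ⟨5, by omega⟩
  - elem3 ⟨1, by omega⟩ ⟨3, by omega⟩ ⟨4, by omega⟩

/-- The `SU(3)` 3-form `σ₀ = e₁∧e₃∧e₅ − e₁∧e₄∧e₆ − e₂∧e₃∧e₆ − e₂∧e₄∧e₅`
(with 1-indexed basis vectors, stated in any `ℝⁿ` with `n ≥ 6`). -/
noncomputable def sigma0Gen {n : ℕ} (h : 6 ≤ n) : AlternatingMap ℝ (Euc n) ℝ (Fin 3) :=
  elem3 ⟨0, by omega⟩ ⟨2, by omega⟩ ⟨4, by omega⟩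
  - elem3 ⟨0, by omega⟩ ⟨3, by omega⟩ ⟨5, by omega⟩
  - elem3 ⟨1, by omega⟩ ⟨2, by omega⟩ ⟨5, by omega⟩
  - elem3 ⟨1, by omega⟩ ⟨3, by omega⟩ ⟨4, by omega⟩

end

/-- The projection `ℝ^{n+1} = ℝⁿ ⊕ ℝ e_{n+1} → ℝⁿ` (dropping the last coordinate). -/
noncomputable def projLast {n : ℕ} : Euc (n + 1) →ₗ[ℝ] Euc n where
  toFun x := (EuclideanSpace.equiv (Fin n) ℝ).symm fun i => x i.castSucc
  map_add' x y := by ext i; simp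
  map_smul' c x := by ext i; simp

section Aux

open scoped RealInnerProductSpace

private lemma vcp_update2 {n : ℕ} (X Y O W : Euc n) :
    Function.update ![X, Y, O] 2 W = ![X, Y, W] := by
  funext i
  fin_cases i <;> simp [Function.update]

/-- The third-slot linear functional of a 3-form. -/
private noncomputable def vcp_thirdSlot {n : ℕ} (τ : AlternatingMap ℝ (Euc n) ℝ (Fin 3))
    (X Y : Euc n) : Euc n →ₗ[ℝ] ℝ where
  toFun Z := τ ![X, Y, Z]
  map_add' Z₁ Z₂ := by
    have h := τ.toMultilinearMap.map_update_add ![X, Y, 0] 2 Z₁ Z₂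
    simpa [vcp_update2] using h
  map_smul' c Z := by
    have h := τ.toMultilinearMap.map_update_smul ![X, Y, 0] 2 c Z
    simpa [vcp_update2] using h

private lemma vcp_euc_decomp {n : ℕ} (Z : Euc n) :
    Z = ∑ i : Fin n, Z i • EuclideanSpace.single i (1 : ℝ) := by
  ext j
  rw [WithLp.ofLp_sum, Finset.sum_apply]
  simp [EuclideanSpace.single_apply]

/-- `⟪τ_X Y, Z⟫ = τ(X, Y, Z)`. -/
private lemma vcp_innerA {n : ℕ} (τ : AlternatingMap ℝ (Euc n) ℝ (Fin 3)) (X Y Z : Euc n) :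
    ⟪contr3 τ X Y, Z⟫ = τ ![X, Y, Z] := by
  have curry_eq : ∀ W : Euc n, ((τ.curryLeft X).curryLeft Y) ![W] = τ ![X, Y, W] :=
    fun W => rfl
  show ⟪∑ i : Fin n, ((τ.curryLeft X).curryLeft Y ![EuclideanSpace.single i 1]) •
      EuclideanSpace.single i (1 : ℝ), Z⟫ = _
  rw [sum_inner]
  simp only [real_inner_smul_left, EuclideanSpace.inner_single_left, map_one, one_mul, curry_eq]
  conv_rhs => rw [show τ ![X, Y, Z] = vcp_thirdSlot τ X Y Z from rfl, vcp_euc_decomp Z]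
  rw [map_sum]
  simp [vcp_thirdSlot, mul_comm]

private lemma vcp_swap23 {n : ℕ} (σ : AlternatingMap ℝ (Euc n) ℝ (Fin 3)) (P Q R : Euc n) :
    σ ![P, R, Q] = -σ ![P, Q, R] := by
  have h := σ.map_swap (v := ![P, Q, R]) (i := 1) (j := 2) (by decide)
  have e : (![P, Q, R] ∘ Equiv.swap (1 : Fin 3) 2) = ![P, R, Q] := by
    funext i
    fin_cases i <;> simp [Equiv.swap_apply_def] <;> rfl
  rwa [e] at h

private lemma vcp_swap12 {n : ℕ} (σ : AlternatingMap ℝ (Euc n) ℝ (Fin 3)) (P Q R : Euc n) :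
    σ ![Q, P, R] = -σ ![P, Q, R] := by
  have h := σ.map_swap (v := ![P, Q, R]) (i := 0) (j := 1) (by decide)
  have e : (![P, Q, R] ∘ Equiv.swap (0 : Fin 3) 1) = ![Q, P, R] := by
    funext i
    fin_cases i <;> simp [Equiv.swap_apply_def] <;> rfl
  rwa [e] at h

/-- skew-symmetry of `σ_X`. -/
private lemma vcp_skew {n : ℕ} (σ : AlternatingMap ℝ (Euc n) ℝ (Fin 3)) (P Q R : Euc n) :
    ⟪contr3 σ P Q, R⟫ = -⟪contr3 σ P R, Q⟫ := by
  rw [vcp_innerA, vcp_innerA, ← vcp_swap23]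

private lemma vcp_map_zero3 {n : ℕ} (σ : AlternatingMap ℝ (Euc n) ℝ (Fin 3)) (P Q : Euc n) :
    σ ![P, Q, 0] = 0 :=
  σ.toMultilinearMap.map_coord_zero 2 rfl

private lemma projLast_apply {n : ℕ} (v : Euc (n + 1)) (i : Fin n) :
    projLast v i = v i.castSucc := rfl

private lemma inner_split {n : ℕ} (v w : Euc (n + 1)) :
    ⟪v, w⟫ = ⟪projLast v, projLast w⟫ + v (Fin.last n) * w (Fin.last n) := by
  have h1 : ⟪v, w⟫ = ∑ i : Fin (n + 1), v i * w i := by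
    simp [PiLp.inner_apply, RCLike.inner_apply, mul_comm]
  have h2 : ⟪projLast v, projLast w⟫ = ∑ i : Fin n, v i.castSucc * w i.castSucc := by
    simp [PiLp.inner_apply, RCLike.inner_apply, projLast_apply, mul_comm]
  rw [h1, h2, Fin.sum_univ_castSucc]

private lemma vcp_coord {m : ℕ} (u : Euc m) (j : Fin m) :
    u j = ⟪u, EuclideanSpace.single j 1⟫ := by
  rw [EuclideanSpace.inner_single_right]
  simp

end Aux

/-- Let `σ` be a 3-form on `ℝⁿ` and let `J` be an orthogonal skew-symmetric
endomorphism of `ℝⁿ` with `J² = −id`, such that `σ_X (JX) = 0` and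
`σ_X² = −‖X‖² id + X⊗X + (JX)⊗(JX)` for all `X ∈ ℝⁿ`. Let `ω_J` be the 2-form
`ω_J(X,Y) = ⟪JX, Y⟫`. Then the 3-form `τ := e_{n+1} ∧ ω_J + σ` on `ℝ^{n+1} = ℝⁿ ⊕ ℝ e_{n+1}`
(characterized by the explicit formula below) is a vector cross product on `ℝ^{n+1}`. -/
theorem statement13 {n : ℕ} (σ : AlternatingMap ℝ (Euc n) ℝ (Fin 3))
    (J : Euc n →ₗ[ℝ] Euc n)
    (hJorth : ∀ X Y : Euc n, ⟪J X, J Y⟫ = ⟪X, Y⟫)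
    (hJskew : ∀ X Y : Euc n, ⟪J X, Y⟫ = -⟪X, J Y⟫)
    (hJ2 : J ∘ₗ J = -LinearMap.id)
    (hker : ∀ X : Euc n, contr3 σ X (J X) = 0)
    (hsq : ∀ X : Euc n, contr3 σ X ∘ₗ contr3 σ X =
      (-(‖X‖ ^ 2)) • LinearMap.id + tens X X + tens (J X) (J X))
    (τ : AlternatingMap ℝ (Euc (n + 1)) ℝ (Fin 3))
    (hτ : ∀ x y z : Euc (n + 1), τ ![x, y, z] =
      x (Fin.last n) * ⟪J (projLast y), projLast z⟫
      - y (Fin.last n) * ⟪J (projLast x), projLast z⟫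
      + z (Fin.last n) * ⟪J (projLast x), projLast y⟫
      + σ ![projLast x, projLast y, projLast z]) :
    IsVCP τ := by
  intro x y
  set X : Euc n := projLast x with hX
  set Y : Euc n := projLast y with hY
  set a : ℝ := x (Fin.last n) with ha
  set b : ℝ := y (Fin.last n) with hb
  set S : Euc n := contr3 σ X Y with hS
  set c : ℝ := ⟪J X, Y⟫ with hc
  set W : Euc n := a • J Y - b • J X + S with hW
  set v : Euc (n + 1) := contr3 τ x y with hv
  -- coordinates of v
  have hsingle_cast_last : ∀ i : Fin n,
      (EuclideanSpace.single i.castSucc (1 : ℝ) : Euc (n + 1)) (Fin.last n) = 0 := by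
    intro i
    rw [EuclideanSpace.single_apply, if_neg i.castSucc_lt_last.ne']
  have hproj_single : ∀ i : Fin n,
      projLast (EuclideanSpace.single i.castSucc (1 : ℝ)) = EuclideanSpace.single i (1 : ℝ) := by
    intro i
    ext j
    rw [projLast_apply, EuclideanSpace.single_apply, EuclideanSpace.single_apply]
    simp [Fin.castSucc_inj]
  have hproj_single_last :
      projLast (EuclideanSpace.single (Fin.last n) (1 : ℝ)) = (0 : Euc n) := by
    ext j
    rw [projLast_apply, EuclideanSpace.single_apply, if_neg j.castSucc_lt_last.ne]
    rfl
  have hWi : ∀ i : Fin n, v i.castSucc = W i := by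
    intro i
    rw [vcp_coord v i.castSucc, hv, vcp_innerA, hτ, hsingle_cast_last, hproj_single]
    have h1 : ⟪J Y, EuclideanSpace.single i (1 : ℝ)⟫ = (J Y) i := by
      rw [EuclideanSpace.inner_single_right]; simp
    have h2 : ⟪J X, EuclideanSpace.single i (1 : ℝ)⟫ = (J X) i := by
      rw [EuclideanSpace.inner_single_right]; simp
    have h3 : σ ![X, Y, EuclideanSpace.single i (1 : ℝ)] = S i := by
      rw [hS, vcp_coord (contr3 σ X Y) i, vcp_innerA]
    rw [← hX, ← hY, ← ha, ← hb, h1, h2, h3]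
    simp [hW, PiLp.add_apply, PiLp.sub_apply, PiLp.smul_apply]
  have hWlast : v (Fin.last n) = c := by
    rw [vcp_coord v (Fin.last n), hv, vcp_innerA, hτ, hproj_single_last, ← hX, ← hY]
    have h1 : (EuclideanSpace.single (Fin.last n) (1 : ℝ) : Euc (n + 1)) (Fin.last n) = 1 := by
      rw [EuclideanSpace.single_apply, if_pos rfl]
    rw [h1, vcp_map_zero3, inner_zero_right, inner_zero_right, ← hc]
    ring
  have hprojv : projLast v = W := by
    ext i
    rw [projLast_apply, hWi]
  -- inner product facts in Euc n
  have hSJX : ⟪S, J X⟫ = 0 := by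
    rw [hS, vcp_innerA, show σ ![X, Y, J X] = -σ ![X, J X, Y] from vcp_swap23 σ X (J X) Y,
      ← vcp_innerA, hker X]
    simp
  have hSJY : ⟪S, J Y⟫ = 0 := by
    rw [hS, vcp_innerA, show σ ![X, Y, J Y] = -σ ![Y, X, J Y] from vcp_swap12 σ Y X (J Y),
      ← vcp_innerA, vcp_skew σ Y X (J Y), hker Y]
    simp
  have eYX : ⟪Y, X⟫ = ⟪X, Y⟫ := by rw [real_inner_comm]
  have eYJX : ⟪Y, J X⟫ = c := by rw [hc, real_inner_comm]
  have hSS : ⟪S, S⟫ = ⟪X, X⟫ * ⟪Y, Y⟫ - ⟪X, Y⟫ ^ 2 - c ^ 2 := by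
    have h1 : ⟪S, S⟫ = -⟪contr3 σ X S, Y⟫ := by rw [hS, vcp_skew σ X Y S, ← hS]
    have h2 : contr3 σ X S = (-(‖X‖ ^ 2)) • Y + ⟪Y, X⟫ • X + ⟪Y, J X⟫ • (J X) := by
      have := congrArg (fun (L : Euc n →ₗ[ℝ] Euc n) => L Y) (hsq X)
      simpa [tens, LinearMap.comp_apply, hS] using this
    rw [h1, h2]
    rw [inner_add_left, inner_add_left, real_inner_smul_left, real_inner_smul_left,
      real_inner_smul_left, ← real_inner_self_eq_norm_sq, eYX, eYJX, ← hc]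
    ring
  -- expand ⟪W, W⟫
  have hWW : ⟪W, W⟫ = a ^ 2 * ⟪Y, Y⟫ + b ^ 2 * ⟪X, X⟫ - 2 * a * b * ⟪X, Y⟫
      + ⟪X, X⟫ * ⟪Y, Y⟫ - ⟪X, Y⟫ ^ 2 - c ^ 2 := by
    have eJYS : ⟪J Y, S⟫ = 0 := by rw [real_inner_comm]; exact hSJY
    have eJXS : ⟪J X, S⟫ = 0 := by rw [real_inner_comm]; exact hSJX
    simp only [hW, inner_add_left, inner_add_right, inner_sub_left, inner_sub_right,
      real_inner_smul_left, real_inner_smul_right, hJorth, hSJX, hSJY, eJYS, eJXS, hSS, eYX]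
    ring
  -- assemble
  have hxx : ‖x‖ ^ 2 = ⟪X, X⟫ + a * a := by
    rw [← real_inner_self_eq_norm_sq, inner_split]
  have hyy : ‖y‖ ^ 2 = ⟪Y, Y⟫ + b * b := by
    rw [← real_inner_self_eq_norm_sq, inner_split]
  have hxy : ⟪x, y⟫ = ⟪X, Y⟫ + a * b := by rw [inner_split]
  have hvv : ‖v‖ ^ 2 = ⟪W, W⟫ + c * c := by
    rw [← real_inner_self_eq_norm_sq, inner_split, hprojv, hWlast]
  rw [hvv, hWW, hxx, hyy, hxy]
  ring
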